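/- For positive definite matrices A₁, B₁ and positive semidefinite matrices A₂, B₂: Tr((A₁−B₁)(B₁⁻¹ − A₁⁻¹) + (A₂−B₂)((B₁+B₂)⁻¹ − (A₁+A₂)⁻¹)) ≥ 0. -/

import Mathlib

open Matrix ComplexOrder

variable {n : ℕ}

private lemma half_nonneg {z : ℂ} (h : 0 ≤ z + z) : 0 ≤ z := by
  rw [Complex.le_def] at h ⊢
  obtain ⟨h1, h2⟩ := h
  simp only [Complex.add_re, Complex.add_im, Complex.zero_re, Complex.zero_im] at h1 h2
  refine ⟨?_, ?_⟩ <;> simp only [Complex.zero_re, Complex.zero_im] <;> linarith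

private lemma tswap (W X Y Z : Matrix (Fin n) (Fin n) ℂ) :
    (W * X * Y * Z).trace = (Y * Z * W * X).trace := by
  rw [Matrix.mul_assoc (W * X) Y Z, Matrix.trace_mul_comm, ← Matrix.mul_assoc]

private lemma inv_sub_inv₁ {X Y : Matrix (Fin n) (Fin n) ℂ}
    (hX : IsUnit X.det) (hY : IsUnit Y.det) :
    Y⁻¹ - X⁻¹ = Y⁻¹ * (X - Y) * X⁻¹ := by
  rw [Matrix.mul_sub, Matrix.sub_mul, Matrix.mul_assoc Y⁻¹ X X⁻¹,
    Matrix.mul_nonsing_inv _ hX, Matrix.mul_one, Matrix.nonsing_inv_mul _ hY, Matrix.one_mul]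

private lemma inv_sub_inv₂ {X Y : Matrix (Fin n) (Fin n) ℂ}
    (hX : IsUnit X.det) (hY : IsUnit Y.det) :
    Y⁻¹ - X⁻¹ = X⁻¹ * (X - Y) * Y⁻¹ := by
  rw [Matrix.mul_sub, Matrix.nonsing_inv_mul _ hX, Matrix.sub_mul, Matrix.one_mul,
    Matrix.mul_assoc X⁻¹ Y Y⁻¹, Matrix.mul_nonsing_inv _ hY, Matrix.mul_one]

private lemma trace_psd_nonneg {M : Matrix (Fin n) (Fin n) ℂ} (hM : M.PosSemidef) :
    0 ≤ M.trace := by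
  exact hM.trace_nonneg

open scoped MatrixOrder in
private lemma trace_mul_psd_nonneg {P Q : Matrix (Fin n) (Fin n) ℂ}
    (hP : P.PosSemidef) (hQ : Q.PosSemidef) : 0 ≤ (P * Q).trace := by
  have hpsd : (CFC.sqrt Q * P * CFC.sqrt Q).PosSemidef := by
    have := hP.mul_mul_conjTranspose_same (CFC.sqrt Q)
    rwa [(CFC.sqrt_nonneg Q).posSemidef.isHermitian.eq] at this
  have : (P * Q).trace = (CFC.sqrt Q * P * CFC.sqrt Q).trace := by
    conv_lhs => rw [← CFC.sqrt_mul_sqrt_self Q hQ.nonneg]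
    rw [← Matrix.mul_assoc, Matrix.trace_mul_comm, Matrix.mul_assoc]
  rw [this]
  exact trace_psd_nonneg hpsd

private lemma trace_conj_nonneg {D X Y : Matrix (Fin n) (Fin n) ℂ}
    (hD : D.IsHermitian) (hX : X.PosSemidef) (hY : Y.PosSemidef) :
    0 ≤ (D * X * D * Y).trace := by
  have h : (D * X * D).PosSemidef := by
    have := hX.mul_mul_conjTranspose_same D
    rwa [hD.eq] at this
  exact trace_mul_psd_nonneg h hY

private lemma inv_sub_inv_psd {B C : Matrix (Fin n) (Fin n) ℂ}
    (hB : B.PosDef) (hC : C.PosSemidef) : (B⁻¹ - (B + C)⁻¹).PosSemidef := by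
  set T := B + C with hTdef
  have hT : T.PosDef := hB.add_posSemidef hC
  have hBu : IsUnit B.det := isUnit_iff_isUnit_det _ |>.mp hB.isUnit
  have hTu : IsUnit T.det := isUnit_iff_isUnit_det _ |>.mp hT.isUnit
  have hN : (C + C * B⁻¹ * C).PosSemidef := by
    refine hC.add ?_
    have := (hB.inv.posSemidef).mul_mul_conjTranspose_same C
    rwa [hC.isHermitian.eq] at this
  set N := C + C * B⁻¹ * C with hNdef
  have h2 : T * B⁻¹ * T = T + N := by
    rw [hTdef, hNdef, Matrix.add_mul, Matrix.mul_nonsing_inv _ hBu, Matrix.add_mul,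
      Matrix.one_mul, Matrix.mul_add, Matrix.mul_assoc C B⁻¹ B,
      Matrix.nonsing_inv_mul _ hBu, Matrix.mul_one]
  have h4 : T⁻¹ * (T * B⁻¹ * T) * T⁻¹ = B⁻¹ := by
    rw [← Matrix.mul_assoc, ← Matrix.mul_assoc, Matrix.nonsing_inv_mul _ hTu, Matrix.one_mul,
      Matrix.mul_assoc, Matrix.mul_nonsing_inv _ hTu, Matrix.mul_one]
  have h5 : T⁻¹ * (T + N) * T⁻¹ = T⁻¹ + T⁻¹ * N * T⁻¹ := by
    rw [Matrix.mul_add, Matrix.add_mul, Matrix.nonsing_inv_mul _ hTu, Matrix.one_mul]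
  have h6 : T⁻¹ + T⁻¹ * N * T⁻¹ = B⁻¹ := by rw [← h5, ← h2, h4]
  have key : B⁻¹ - T⁻¹ = T⁻¹ * N * T⁻¹ := by rw [← h6]; abel
  rw [key]
  have := hN.mul_mul_conjTranspose_same T⁻¹
  rwa [(hT.isHermitian.inv).eq] at this

private lemma key_ineq {D E X Y X' Y' : Matrix (Fin n) (Fin n) ℂ}
    (hD : D.IsHermitian) (hE : E.IsHermitian)
    (hX : X.PosSemidef) (hY : Y.PosSemidef) (hX' : X'.PosSemidef) (hY' : Y'.PosSemidef)
    (hXX : (X - X').PosSemidef) (hYY : (Y - Y').PosSemidef) :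
    0 ≤ ((D * X * D * Y).trace + (E * X' * D * Y').trace + (E * X' * E * Y').trace) +
        ((D * X * D * Y).trace + (D * X' * E * Y').trace + (E * X' * E * Y').trace) := by
  have h3 : 0 ≤ (D * X * D * Y).trace := trace_conj_nonneg hD hX hY
  have h4 : 0 ≤ (E * X' * E * Y').trace := trace_conj_nonneg hE hX' hY'
  have ha : 0 ≤ (D * (X - X') * D * Y).trace := trace_conj_nonneg hD hXX hY
  have hb : 0 ≤ (D * X' * D * (Y - Y')).trace := trace_conj_nonneg hD hX' hYY
  have h1 : (D * X * D * Y).trace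
      = (D * (X - X') * D * Y).trace + (D * X' * D * (Y - Y')).trace
        + (D * X' * D * Y').trace := by
    rw [show D * X * D * Y
        = D * (X - X') * D * Y + (D * X' * D * (Y - Y') + D * X' * D * Y') from by noncomm_ring,
      Matrix.trace_add, Matrix.trace_add]
    ring
  have h2 : 0 ≤ (D * X' * D * Y').trace + (D * X' * E * Y').trace
      + (E * X' * D * Y').trace + (E * X' * E * Y').trace := by
    have h := trace_conj_nonneg (hD.add hE) hX' hY'
    rw [show (D + E) * X' * (D + E) * Y'
        = D * X' * D * Y' + (D * X' * E * Y' + (E * X' * D * Y' + E * X' * E * Y'))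
        from by noncomm_ring, Matrix.trace_add, Matrix.trace_add, Matrix.trace_add] at h
    exact le_of_le_of_eq h (by ring)
  have htot : ((D * X * D * Y).trace + (E * X' * D * Y').trace + (E * X' * E * Y').trace) +
        ((D * X * D * Y).trace + (D * X' * E * Y').trace + (E * X' * E * Y').trace)
      = (D * X * D * Y).trace + ((D * (X - X') * D * Y).trace + (D * X' * D * (Y - Y')).trace)
        + ((D * X' * D * Y').trace + (D * X' * E * Y').trace
            + (E * X' * D * Y').trace + (E * X' * E * Y').trace)
        + (E * X' * E * Y').trace := by linear_combination h1
  rw [htot]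
  exact add_nonneg (add_nonneg (add_nonneg h3 (add_nonneg ha hb)) h2) h4

theorem trace_K2_case (n : ℕ) (A₁ B₁ A₂ B₂ : Matrix (Fin n) (Fin n) ℂ)
    (hA1 : A₁.PosDef) (hB1 : B₁.PosDef) (hA2 : A₂.PosSemidef) (hB2 : B₂.PosSemidef) :
    0 ≤ Matrix.trace ((A₁ - B₁) * (B₁⁻¹ - A₁⁻¹) +
      (A₂ - B₂) * ((B₁ + B₂)⁻¹ - (A₁ + A₂)⁻¹)) := by
  have hS : (A₁ + A₂).PosDef := hA1.add_posSemidef hA2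
  have hT : (B₁ + B₂).PosDef := hB1.add_posSemidef hB2
  have hA1u : IsUnit A₁.det := (isUnit_iff_isUnit_det _).mp hA1.isUnit
  have hB1u : IsUnit B₁.det := (isUnit_iff_isUnit_det _).mp hB1.isUnit
  have hSu : IsUnit (A₁ + A₂).det := (isUnit_iff_isUnit_det _).mp hS.isUnit
  have hTu : IsUnit (B₁ + B₂).det := (isUnit_iff_isUnit_det _).mp hT.isUnit
  have hD : (A₁ - B₁).IsHermitian := hA1.isHermitian.sub hB1.isHermitian
  have hE : (A₂ - B₂).IsHermitian := hA2.isHermitian.sub hB2.isHermitian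
  have e1 : B₁⁻¹ - A₁⁻¹ = B₁⁻¹ * (A₁ - B₁) * A₁⁻¹ := inv_sub_inv₁ hA1u hB1u
  have e1' : B₁⁻¹ - A₁⁻¹ = A₁⁻¹ * (A₁ - B₁) * B₁⁻¹ := inv_sub_inv₂ hA1u hB1u
  have e2 : (B₁ + B₂)⁻¹ - (A₁ + A₂)⁻¹
      = (B₁ + B₂)⁻¹ * ((A₁ + A₂) - (B₁ + B₂)) * (A₁ + A₂)⁻¹ := inv_sub_inv₁ hSu hTu
  have e2' : (B₁ + B₂)⁻¹ - (A₁ + A₂)⁻¹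
      = (A₁ + A₂)⁻¹ * ((A₁ + A₂) - (B₁ + B₂)) * (B₁ + B₂)⁻¹ := inv_sub_inv₂ hSu hTu
  have hd : (A₁ + A₂) - (B₁ + B₂) = (A₁ - B₁) + (A₂ - B₂) := by abel
  have L₁ : Matrix.trace ((A₁ - B₁) * (B₁⁻¹ - A₁⁻¹) +
        (A₂ - B₂) * ((B₁ + B₂)⁻¹ - (A₁ + A₂)⁻¹))
      = ((A₁ - B₁) * B₁⁻¹ * (A₁ - B₁) * A₁⁻¹).trace
        + ((A₂ - B₂) * (B₁ + B₂)⁻¹ * (A₁ - B₁) * (A₁ + A₂)⁻¹).trace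
        + ((A₂ - B₂) * (B₁ + B₂)⁻¹ * (A₂ - B₂) * (A₁ + A₂)⁻¹).trace := by
    rw [e1, e2, hd,
      show (A₁ - B₁) * (B₁⁻¹ * (A₁ - B₁) * A₁⁻¹)
        = (A₁ - B₁) * B₁⁻¹ * (A₁ - B₁) * A₁⁻¹ from by noncomm_ring,
      show (A₂ - B₂) * ((B₁ + B₂)⁻¹ * ((A₁ - B₁) + (A₂ - B₂)) * (A₁ + A₂)⁻¹)
        = (A₂ - B₂) * (B₁ + B₂)⁻¹ * (A₁ - B₁) * (A₁ + A₂)⁻¹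
          + (A₂ - B₂) * (B₁ + B₂)⁻¹ * (A₂ - B₂) * (A₁ + A₂)⁻¹ from by noncomm_ring,
      Matrix.trace_add, Matrix.trace_add]
    ring
  have L₂ : Matrix.trace ((A₁ - B₁) * (B₁⁻¹ - A₁⁻¹) +
        (A₂ - B₂) * ((B₁ + B₂)⁻¹ - (A₁ + A₂)⁻¹))
      = ((A₁ - B₁) * B₁⁻¹ * (A₁ - B₁) * A₁⁻¹).trace
        + ((A₁ - B₁) * (B₁ + B₂)⁻¹ * (A₂ - B₂) * (A₁ + A₂)⁻¹).trace
        + ((A₂ - B₂) * (B₁ + B₂)⁻¹ * (A₂ - B₂) * (A₁ + A₂)⁻¹).trace := by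
    rw [e1', e2', hd,
      show (A₁ - B₁) * (A₁⁻¹ * (A₁ - B₁) * B₁⁻¹)
        = (A₁ - B₁) * A₁⁻¹ * (A₁ - B₁) * B₁⁻¹ from by noncomm_ring,
      show (A₂ - B₂) * ((A₁ + A₂)⁻¹ * ((A₁ - B₁) + (A₂ - B₂)) * (B₁ + B₂)⁻¹)
        = (A₂ - B₂) * (A₁ + A₂)⁻¹ * (A₁ - B₁) * (B₁ + B₂)⁻¹
          + (A₂ - B₂) * (A₁ + A₂)⁻¹ * (A₂ - B₂) * (B₁ + B₂)⁻¹ from by noncomm_ring,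
      Matrix.trace_add, Matrix.trace_add,
      tswap (A₁ - B₁) A₁⁻¹ (A₁ - B₁) B₁⁻¹,
      tswap (A₂ - B₂) (A₁ + A₂)⁻¹ (A₁ - B₁) (B₁ + B₂)⁻¹,
      tswap (A₂ - B₂) (A₁ + A₂)⁻¹ (A₂ - B₂) (B₁ + B₂)⁻¹]
    ring
  apply half_nonneg
  have hcomb := key_ineq (n := n) hD hE hB1.inv.posSemidef hA1.inv.posSemidef
    hT.inv.posSemidef hS.inv.posSemidef (inv_sub_inv_psd hB1 hB2) (inv_sub_inv_psd hA1 hA2)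
  refine le_of_le_of_eq hcomb ?_
  linear_combination - L₁ - L₂
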